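/- The generating polynomial D_n(q,t) = sum over Dyck paths p of order n of q^(area(p)) t^(rk(p)) admits the decomposition D_n(q,t) = sum over Motzkin paths m of order n of q^(area(m)) * t^(rk(m)) * (1+qt)^(n-1-2*rk(m)), for n ≥ 1. -/

import Mathlib

open Finset

/-- Number of up steps (`true`) among the first `k` steps of `p`. -/
def upCount {m : ℕ} (p : Fin m → Bool) (k : ℕ) : ℕ :=
  (Finset.univ.filter fun i : Fin m => (i : ℕ) < k ∧ p i = true).card

/-- Number of down steps (`false`) among the first `k` steps of `p`. -/
def downCount {m : ℕ} (p : Fin m → Bool) (k : ℕ) : ℕ :=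
  (Finset.univ.filter fun i : Fin m => (i : ℕ) < k ∧ p i = false).card

/-- `p` is a Dyck path of order `n`: a path of `2n` steps (up = `true`,
down = `false`), with `n` up steps, never going below the x-axis. -/
def IsDyck (n : ℕ) (p : Fin (2 * n) → Bool) : Prop :=
  upCount p (2 * n) = n ∧ ∀ k < 2 * n + 1, downCount p k ≤ upCount p k

instance (n : ℕ) : DecidablePred (IsDyck n) := fun p => by
  unfold IsDyck; infer_instance

/-- The Finset of Dyck paths of order `n`. -/
def dyckSet (n : ℕ) : Finset (Fin (2 * n) → Bool) :=
  Finset.univ.filter (IsDyck n)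

/-- Height of the path after `k` steps. -/
def height {n : ℕ} (p : Fin (2 * n) → Bool) (k : ℕ) : ℕ :=
  upCount p k - downCount p k

/-- The area of a Dyck path: the number of unused lattice points strictly below
the path and weakly above the x-axis (equivalently, the number of
`1/√2 × 1/√2` diamonds fitting between the path and the x-axis). -/
def area {n : ℕ} (p : Fin (2 * n) → Bool) : ℕ :=
  ∑ k ∈ Finset.range (2 * n + 1), height p k / 2

/-- The `j`-th step of `p` (defaulting to `false` out of range). -/
def stepAt {m : ℕ} (p : Fin m → Bool) (j : ℕ) : Bool :=
  if h : j < m then p ⟨j, h⟩ else false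

/-- The rank of a Dyck path of order `n` in the noncrossing partition lattice
under Stump's bijection: equivalently (Simion–Ullman) the number of letters `b`
and `r` in its SU-word, i.e. the number of `i ∈ {1,…,n-1}` for which the step
leaving the `i`-th odd lattice point (the step with index `2i-1`, 0-indexed)
is an up step. -/
def rk {n : ℕ} (p : Fin (2 * n) → Bool) : ℕ :=
  ((Finset.Icc 1 (n - 1)).filter fun i => stepAt p (2 * i - 1) = true).card

def upM {k : ℕ} (m : Fin k → Option Bool) (j : ℕ) : ℕ :=
  (Finset.univ.filter fun i : Fin k => (i : ℕ) < j ∧ m i = some true).card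

def downM {k : ℕ} (m : Fin k → Option Bool) (j : ℕ) : ℕ :=
  (Finset.univ.filter fun i : Fin k => (i : ℕ) < j ∧ m i = some false).card

/-- A Motzkin word (`some true` = up, `some false` = down, `none` = level):
as many ups as downs, every prefix having at least as many ups as downs.
A Motzkin path of order `n` is such a word of length `n-1`. -/
def IsMotzkin {k : ℕ} (m : Fin k → Option Bool) : Prop :=
  upM m k = downM m k ∧ ∀ j < k + 1, downM m j ≤ upM m j

instance (k : ℕ) : DecidablePred (IsMotzkin (k := k)) := fun m => by
  unfold IsMotzkin; infer_instance

/-- The Finset of Motzkin paths of order `n` (length `n-1`). -/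
def motzSet (n : ℕ) : Finset (Fin (n - 1) → Option Bool) :=
  Finset.univ.filter IsMotzkin

/-- The rank of a Motzkin path: its number of up steps. -/
def rkM {k : ℕ} (m : Fin k → Option Bool) : ℕ := upM m k

def mext {k : ℕ} (m : Fin k → Option Bool) (i : ℕ) : Option Bool :=
  if h : i < k then m ⟨i, h⟩ else none

/-- ρ : Motzkin paths of order `n` → Dyck paths of order `n`.  Prepend an up
step and append a down step; up steps become two up steps, down steps two down
steps, and each level step becomes a down-up pair. -/
def rho (n : ℕ) (m : Fin (n - 1) → Option Bool) : Fin (2 * n) → Bool := fun j =>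
  if (j : ℕ) = 0 then true
  else if (j : ℕ) = 2 * n - 1 then false
  else
    match mext m (((j : ℕ) - 1) / 2) with
    | some b => b
    | none => decide ((j : ℕ) % 2 = 0)

/-- The area of a Motzkin path is the area of the Dyck path `ρ(m)`. -/
def areaM (n : ℕ) (m : Fin (n - 1) → Option Bool) : ℕ := area (rho n m)

lemma count_sum_aux {M : ℕ} (p : Fin M → Bool) (k : ℕ) (P : Bool → Prop) [DecidablePred P]
    (hP : ¬ P false) :
    (Finset.univ.filter fun i : Fin M => (i : ℕ) < k ∧ P (p i)).card
      = ∑ j ∈ Finset.range k, (if P (stepAt p j) then 1 else 0) := by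
  rw [Finset.card_filter]
  have h1 : ∀ i : Fin M, (if ((i:ℕ) < k ∧ P (p i)) then (1:ℕ) else 0)
      = (fun j : ℕ => if (j < k ∧ P (stepAt p j)) then (1:ℕ) else 0) (i:ℕ) := by
    intro i; simp [stepAt]
  simp only [h1]
  rw [Fin.sum_univ_eq_sum_range (fun j : ℕ => if (j < k ∧ P (stepAt p j)) then (1:ℕ) else 0)]
  have e1 : ∑ j ∈ Finset.range M, (if (j < k ∧ P (stepAt p j)) then (1:ℕ) else 0)
      = ∑ j ∈ Finset.range (min k M), (if (j < k ∧ P (stepAt p j)) then (1:ℕ) else 0) := by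
    apply (Finset.sum_subset (Finset.range_subset_range.2 (min_le_right _ _)) _).symm
    intro j hj hj'
    simp only [Finset.mem_range, lt_min_iff, not_and_or, not_lt] at hj hj'
    have h : ¬ j < k := by omega
    simp [h]
  have e2 : ∑ j ∈ Finset.range k, (if P (stepAt p j) then (1:ℕ) else 0)
      = ∑ j ∈ Finset.range (min k M), (if P (stepAt p j) then (1:ℕ) else 0) := by
    apply (Finset.sum_subset (Finset.range_subset_range.2 (min_le_left _ _)) _).symm
    intro j hj hj'
    simp only [Finset.mem_range, lt_min_iff, not_and_or, not_lt] at hj hj'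
    have hjM : M ≤ j := by omega
    simp [stepAt, Nat.not_lt.2 hjM, hP]
  rw [e1, e2]
  apply Finset.sum_congr rfl
  intro j hj
  simp only [Finset.mem_range, lt_min_iff] at hj
  simp [hj.1]

lemma upCount_eq_sum {M : ℕ} (p : Fin M → Bool) (k : ℕ) :
    upCount p k = ∑ j ∈ Finset.range k, (if stepAt p j = true then 1 else 0) :=
  count_sum_aux p k (fun b => b = true) (by simp)

lemma downCount_eq_sum {M : ℕ} (p : Fin M → Bool) (k : ℕ) (hk : k ≤ M) :
    downCount p k = ∑ j ∈ Finset.range k, (if stepAt p j = false then 1 else 0) := by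
  unfold downCount
  rw [Finset.card_filter]
  have h1 : ∀ i : Fin M, (if ((i:ℕ) < k ∧ p i = false) then (1:ℕ) else 0)
      = (fun j : ℕ => if (j < k ∧ stepAt p j = false) then (1:ℕ) else 0) (i:ℕ) := by
    intro i; simp [stepAt]
  simp only [h1]
  rw [Fin.sum_univ_eq_sum_range (fun j : ℕ => if (j < k ∧ stepAt p j = false) then (1:ℕ) else 0)]
  rw [← Finset.sum_subset (Finset.range_subset_range.2 hk)
    (f := fun j : ℕ => if (j < k ∧ stepAt p j = false) then (1:ℕ) else 0)]
  · apply Finset.sum_congr rfl; intro j hj; simp [Finset.mem_range.1 hj]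
  · intro j _ hj; simp only [Finset.mem_range, not_lt] at hj; simp; omega

lemma countM_sum_aux {M : ℕ} (m : Fin M → Option Bool) (k : ℕ) (P : Option Bool → Prop)
    [DecidablePred P] (hP : ¬ P none) :
    (Finset.univ.filter fun i : Fin M => (i : ℕ) < k ∧ P (m i)).card
      = ∑ j ∈ Finset.range k, (if P (mext m j) then 1 else 0) := by
  rw [Finset.card_filter]
  have h1 : ∀ i : Fin M, (if ((i:ℕ) < k ∧ P (m i)) then (1:ℕ) else 0)
      = (fun j : ℕ => if (j < k ∧ P (mext m j)) then (1:ℕ) else 0) (i:ℕ) := by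
    intro i; simp [mext]
  simp only [h1]
  rw [Fin.sum_univ_eq_sum_range (fun j : ℕ => if (j < k ∧ P (mext m j)) then (1:ℕ) else 0)]
  have e1 : ∑ j ∈ Finset.range M, (if (j < k ∧ P (mext m j)) then (1:ℕ) else 0)
      = ∑ j ∈ Finset.range (min k M), (if (j < k ∧ P (mext m j)) then (1:ℕ) else 0) := by
    apply (Finset.sum_subset (Finset.range_subset_range.2 (min_le_right _ _)) _).symm
    intro j hj hj'
    simp only [Finset.mem_range, lt_min_iff, not_and_or, not_lt] at hj hj'
    have h : ¬ j < k := by omega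
    simp [h]
  have e2 : ∑ j ∈ Finset.range k, (if P (mext m j) then (1:ℕ) else 0)
      = ∑ j ∈ Finset.range (min k M), (if P (mext m j) then (1:ℕ) else 0) := by
    apply (Finset.sum_subset (Finset.range_subset_range.2 (min_le_left _ _)) _).symm
    intro j hj hj'
    simp only [Finset.mem_range, lt_min_iff, not_and_or, not_lt] at hj hj'
    have hjM : M ≤ j := by omega
    simp [mext, Nat.not_lt.2 hjM, hP]
  rw [e1, e2]
  apply Finset.sum_congr rfl
  intro j hj
  simp only [Finset.mem_range, lt_min_iff] at hj
  simp [hj.1]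

lemma upM_eq_sum {M : ℕ} (m : Fin M → Option Bool) (k : ℕ) :
    upM m k = ∑ j ∈ Finset.range k, (if mext m j = some true then 1 else 0) :=
  countM_sum_aux m k (fun o => o = some true) (by simp)

lemma downM_eq_sum {M : ℕ} (m : Fin M → Option Bool) (k : ℕ) :
    downM m k = ∑ j ∈ Finset.range k, (if mext m j = some false then 1 else 0) :=
  countM_sum_aux m k (fun o => o = some false) (by simp)

lemma upM_le {M : ℕ} (m : Fin M → Option Bool) (k : ℕ) :
    upM m k ≤ k := by
  rw [upM_eq_sum]
  calc ∑ j ∈ Finset.range k, (if mext m j = some true then 1 else 0)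
      ≤ ∑ j ∈ Finset.range k, 1 := by
        apply Finset.sum_le_sum; intro i _; split <;> omega
    _ = k := by simp

lemma downM_le {M : ℕ} (m : Fin M → Option Bool) (k : ℕ) :
    downM m k ≤ k := by
  rw [downM_eq_sum]
  calc ∑ j ∈ Finset.range k, (if mext m j = some false then 1 else 0)
      ≤ ∑ j ∈ Finset.range k, 1 := by
        apply Finset.sum_le_sum; intro i _; split <;> omega
    _ = k := by simp

lemma upM_add_downM_le {M : ℕ} (m : Fin M → Option Bool) (k : ℕ) :
    upM m k + downM m k ≤ k := by
  rw [upM_eq_sum, downM_eq_sum, ← Finset.sum_add_distrib]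
  calc ∑ j ∈ Finset.range k, ((if mext m j = some true then 1 else 0)
        + (if mext m j = some false then 1 else 0))
      ≤ ∑ j ∈ Finset.range k, 1 := by
        apply Finset.sum_le_sum; intro i _
        rcases h : mext m i with _ | b
        · simp
        · cases b <;> simp
    _ = k := by simp

lemma upM_succ {M : ℕ} (m : Fin M → Option Bool) (k : ℕ) :
    upM m (k + 1) = upM m k + (if mext m k = some true then 1 else 0) := by
  rw [upM_eq_sum, upM_eq_sum, Finset.sum_range_succ]

lemma downM_succ {M : ℕ} (m : Fin M → Option Bool) (k : ℕ) :
    downM m (k + 1) = downM m k + (if mext m k = some false then 1 else 0) := by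
  rw [downM_eq_sum, downM_eq_sum, Finset.sum_range_succ]

def cext {k : ℕ} (c : Fin k → Bool) (i : ℕ) : Bool :=
  if h : i < k then c ⟨i, h⟩ else false

def psi (n : ℕ) (m : Fin (n - 1) → Option Bool) (c : Fin (n - 1) → Bool) :
    Fin (2 * n) → Bool := fun j =>
  if (j : ℕ) = 0 then true
  else if (j : ℕ) = 2 * n - 1 then false
  else
    match mext m (((j : ℕ) - 1) / 2) with
    | some b => b
    | none => if cext c (((j : ℕ) - 1) / 2) then decide ((j : ℕ) % 2 = 1)
              else decide ((j : ℕ) % 2 = 0)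

lemma rho_eq_psi (n : ℕ) (m : Fin (n - 1) → Option Bool) :
    rho n m = psi n m (fun _ => false) := by
  funext j
  simp only [rho, psi, cext]
  rcases mext m (((j : ℕ) - 1) / 2) with _ | b <;> simp <;> omega

lemma stepAt_psi {n : ℕ} (m : Fin (n - 1) → Option Bool) (c : Fin (n - 1) → Bool)
    {j : ℕ} (h : j < 2 * n) :
    stepAt (psi n m c) j =
      (if j = 0 then true
       else if j = 2 * n - 1 then false
       else
         match mext m ((j - 1) / 2) with
         | some b => b
         | none => if cext c ((j - 1) / 2) then decide (j % 2 = 1)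
                   else decide (j % 2 = 0)) := by
  simp [stepAt, h, psi]

lemma stepAt_psi_zero {n : ℕ} (m : Fin (n - 1) → Option Bool) (c : Fin (n - 1) → Bool)
    (hn : 1 ≤ n) : stepAt (psi n m c) 0 = true := by
  rw [stepAt_psi m c (by omega)]; simp

lemma stepAt_psi_last {n : ℕ} (m : Fin (n - 1) → Option Bool) (c : Fin (n - 1) → Bool)
    (hn : 1 ≤ n) : stepAt (psi n m c) (2 * n - 1) = false := by
  rw [stepAt_psi m c (by omega)]
  have h0 : ¬ (2 * n - 1 = 0) := by omega
  simp [h0]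

lemma stepAt_psi_fst {n : ℕ} (m : Fin (n - 1) → Option Bool) (c : Fin (n - 1) → Bool)
    {i : ℕ} (hi : i < n - 1) :
    stepAt (psi n m c) (2 * i + 1) =
      (match mext m i with
       | some b => b
       | none => cext c i) := by
  rw [stepAt_psi m c (by omega)]
  have h0 : ¬ (2 * i + 1 = 0) := by omega
  have h1 : ¬ (2 * i + 1 = 2 * n - 1) := by omega
  have h2 : (2 * i + 1 - 1) / 2 = i := by omega
  have h3 : (2 * i + 1) % 2 = 1 := by omega
  simp only [h0, h1, if_false, h2, h3]
  rcases mext m i with _ | b <;> simp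

lemma stepAt_psi_snd {n : ℕ} (m : Fin (n - 1) → Option Bool) (c : Fin (n - 1) → Bool)
    {i : ℕ} (hi : i < n - 1) :
    stepAt (psi n m c) (2 * i + 2) =
      (match mext m i with
       | some b => b
       | none => !(cext c i)) := by
  rw [stepAt_psi m c (by omega)]
  have h0 : ¬ (2 * i + 2 = 0) := by omega
  have h1 : ¬ (2 * i + 2 = 2 * n - 1) := by omega
  have h2 : (2 * i + 2 - 1) / 2 = i := by omega
  have h3 : (2 * i + 2) % 2 = 0 := by omega
  simp only [h0, h1, if_false, h2, h3]
  rcases mext m i with _ | b <;> cases h : cext c i <;> simp [h]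

lemma psi_counts {n : ℕ} (m : Fin (n - 1) → Option Bool) (c : Fin (n - 1) → Bool)
    (hn : 1 ≤ n) :
    ∀ i, i ≤ n - 1 →
      upCount (psi n m c) (2 * i + 1) = 1 + upM m i + (i - downM m i) ∧
      downCount (psi n m c) (2 * i + 1) = downM m i + (i - upM m i) := by
  intro i
  induction i with
  | zero =>
    intro _
    have h1 : (1 : ℕ) ≤ 2 * n := by omega
    constructor
    · rw [upCount_eq_sum, Finset.sum_range_one, stepAt_psi_zero m c hn]
      simp [upM_eq_sum, downM_eq_sum]
    · rw [downCount_eq_sum _ _ h1, Finset.sum_range_one, stepAt_psi_zero m c hn]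
      simp [upM_eq_sum, downM_eq_sum]
  | succ i ih =>
    intro hi
    have hi' : i < n - 1 := by omega
    obtain ⟨hu, hd⟩ := ih (by omega)
    have hub := upM_le m i
    have hdb := downM_le m i
    have hsb := upM_add_downM_le m i
    have hfst := stepAt_psi_fst m c hi'
    have hsnd := stepAt_psi_snd m c hi'
    have hk : 2 * (i + 1) + 1 ≤ 2 * n := by omega
    rw [upCount_eq_sum] at hu
    rw [downCount_eq_sum _ _ (by omega : 2 * i + 1 ≤ 2 * n)] at hd
    have S : ∀ g : ℕ → ℕ, ∑ j ∈ Finset.range (2 * (i + 1) + 1), g j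
        = (∑ j ∈ Finset.range (2 * i + 1), g j) + g (2 * i + 1) + g (2 * i + 2) := by
      intro g
      have h : 2 * (i + 1) + 1 = (2 * i + 1) + 1 + 1 := by ring
      have h2 : 2 * i + 1 + 1 = 2 * i + 2 := by ring
      rw [h, Finset.sum_range_succ, Finset.sum_range_succ, h2]
    constructor
    · rw [upCount_eq_sum, S, hu, hfst, hsnd, upM_succ, downM_succ]
      rcases hmi : mext m i with _ | b
      · cases hc : cext c i <;> simp [hc] <;> omega
      · cases b <;> simp <;> omega
    · rw [downCount_eq_sum _ _ hk, S, hd, hfst, hsnd, upM_succ, downM_succ]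
      rcases hmi : mext m i with _ | b
      · cases hc : cext c i <;> simp [hc] <;> omega
      · cases b <;> simp <;> omega

lemma upCount_succ {M : ℕ} (p : Fin M → Bool) (k : ℕ) :
    upCount p (k + 1) = upCount p k + (if stepAt p k = true then 1 else 0) := by
  rw [upCount_eq_sum, upCount_eq_sum, Finset.sum_range_succ]

lemma downCount_succ {M : ℕ} (p : Fin M → Bool) (k : ℕ) (hk : k + 1 ≤ M) :
    downCount p (k + 1) = downCount p k + (if stepAt p k = false then 1 else 0) := by
  rw [downCount_eq_sum _ _ hk, downCount_eq_sum _ _ (by omega), Finset.sum_range_succ]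

lemma count_total {M : ℕ} (p : Fin M → Bool) (k : ℕ) (hk : k ≤ M) :
    upCount p k + downCount p k = k := by
  rw [upCount_eq_sum, downCount_eq_sum _ _ hk, ← Finset.sum_add_distrib]
  have : ∀ j ∈ Finset.range k,
      ((if stepAt p j = true then 1 else 0) + (if stepAt p j = false then 1 else 0)) = 1 := by
    intro j _; cases stepAt p j <;> simp
  rw [Finset.sum_congr rfl this]; simp

lemma dyck_step_zero {n : ℕ} (p : Fin (2 * n) → Bool) (hn : 1 ≤ n) (hp : IsDyck n p) :
    stepAt p 0 = true := by
  have h1 := hp.2 1 (by omega)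
  have h2 := count_total p 1 (by omega)
  have h3 := upCount_eq_sum p 1
  rw [Finset.sum_range_one] at h3
  cases h : stepAt p 0
  · rw [h] at h3; simp at h3; omega
  · rfl

lemma dyck_step_last {n : ℕ} (p : Fin (2 * n) → Bool) (hn : 1 ≤ n) (hp : IsDyck n p) :
    stepAt p (2 * n - 1) = false := by
  have htot := count_total p (2 * n) le_rfl
  have hup : upCount p (2 * n) = n := hp.1
  have h1 := hp.2 (2 * n - 1) (by omega)
  have h2 := count_total p (2 * n - 1) (by omega)
  have e : 2 * n = (2 * n - 1) + 1 := by omega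
  have hu := upCount_succ p (2 * n - 1)
  have hd := downCount_succ p (2 * n - 1) (by omega)
  rw [← e] at hu hd
  cases h : stepAt p (2 * n - 1)
  · rfl
  · rw [h] at hu hd; simp at hu hd; omega

lemma motz_to_dyck {n : ℕ} (m : Fin (n - 1) → Option Bool) (c : Fin (n - 1) → Bool)
    (hn : 1 ≤ n) (hM : IsMotzkin m) : IsDyck n (psi n m c) := by
  have hMeq : upM m (n - 1) = downM m (n - 1) := hM.1
  have hMle : ∀ j, j ≤ n - 1 → downM m j ≤ upM m j := fun j hj => hM.2 j (by omega)
  constructor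
  · have e : 2 * n = (2 * (n - 1) + 1) + 1 := by omega
    obtain ⟨hu, hd⟩ := psi_counts m c hn (n - 1) le_rfl
    have hsb := upM_add_downM_le m (n - 1)
    have e' : upCount (psi n m c) (2 * n) = upCount (psi n m c) ((2 * (n - 1) + 1) + 1) :=
      congrArg _ e
    rw [upCount_succ, show 2 * (n - 1) + 1 = 2 * n - 1 by omega,
      stepAt_psi_last m c hn] at e'
    rw [e', show 2 * n - 1 = 2 * (n - 1) + 1 by omega, hu]
    simp; omega
  · intro k hk
    rcases Nat.eq_zero_or_pos k with rfl | hk0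
    · rw [upCount_eq_sum, downCount_eq_sum _ _ (by omega)]; simp
    rcases Nat.even_or_odd (k - 1) with ⟨i, hi⟩ | ⟨i, hi⟩
    · -- k = 2i+1
      have hkk : k = 2 * i + 1 := by omega
      have hile : i ≤ n - 1 := by omega
      obtain ⟨hu, hd⟩ := psi_counts m c hn i hile
      have hsb := upM_add_downM_le m i
      have := hMle i hile
      rw [hkk, hu, hd]; omega
    · -- k = 2i+2
      have hkk : k = 2 * i + 2 := by omega
      have hile : i ≤ n - 1 := by omega
      obtain ⟨hu, hd⟩ := psi_counts m c hn i hile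
      have hsb := upM_add_downM_le m i
      have hle := hMle i hile
      have e : 2 * i + 2 = (2 * i + 1) + 1 := by omega
      have hu2 := upCount_succ (psi n m c) (2 * i + 1)
      have hd2 := downCount_succ (psi n m c) (2 * i + 1) (by omega)
      rw [← e] at hu2 hd2
      rw [hkk, hu2, hd2, hu, hd]
      cases stepAt (psi n m c) (2 * i + 1) <;> simp <;> omega

lemma dyck_to_motz {n : ℕ} (m : Fin (n - 1) → Option Bool) (c : Fin (n - 1) → Bool)
    (hn : 1 ≤ n) (hD : IsDyck n (psi n m c)) : IsMotzkin m := by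
  have hle : ∀ j, j ≤ n - 1 → downM m j ≤ upM m j := by
    intro j hj
    obtain ⟨hu, hd⟩ := psi_counts m c hn j hj
    have h1 := hD.2 (2 * j + 1) (by omega)
    have hsb := upM_add_downM_le m j
    rw [hu, hd] at h1; omega
  constructor
  · have e : 2 * n = (2 * (n - 1) + 1) + 1 := by omega
    obtain ⟨hu, hd⟩ := psi_counts m c hn (n - 1) le_rfl
    have hsb := upM_add_downM_le m (n - 1)
    have htot := hD.1
    have e' : upCount (psi n m c) (2 * n) = upCount (psi n m c) ((2 * (n - 1) + 1) + 1) :=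
      congrArg _ e
    rw [upCount_succ, show 2 * (n - 1) + 1 = 2 * n - 1 by omega,
      stepAt_psi_last m c hn, show 2 * n - 1 = 2 * (n - 1) + 1 by omega, hu] at e'
    rw [e'] at htot
    simp at htot
    have := hle (n - 1) le_rfl
    omega
  · intro j hj; exact hle j (by omega)

def phi (n : ℕ) (p : Fin (2 * n) → Bool) : Fin (n - 1) → Option Bool := fun i =>
  match stepAt p (2 * (i : ℕ) + 1), stepAt p (2 * (i : ℕ) + 2) with
  | true, true => some true
  | false, false => some false
  | _, _ => none

def chi (n : ℕ) (p : Fin (2 * n) → Bool) : Fin (n - 1) → Bool := fun i =>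
  stepAt p (2 * (i : ℕ) + 1) && !(stepAt p (2 * (i : ℕ) + 2))

lemma stepAt_val {M : ℕ} (p : Fin M → Bool) (j : Fin M) : stepAt p (j : ℕ) = p j := by
  simp [stepAt, j.2]

lemma psi_phi_chi {n : ℕ} (p : Fin (2 * n) → Bool) (hn : 1 ≤ n)
    (h0 : stepAt p 0 = true) (hl : stepAt p (2 * n - 1) = false) :
    psi n (phi n p) (chi n p) = p := by
  funext j
  have hj2 : (j : ℕ) < 2 * n := j.2
  have hstep : ∀ j' : ℕ, j' = (j : ℕ) → stepAt p j' = p j := by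
    intro j' hj'; subst hj'; simp [stepAt, hj2]
  rcases Nat.eq_zero_or_pos (j : ℕ) with hj0 | hj0
  · have heq : psi n (phi n p) (chi n p) j = true := by simp [psi, hj0]
    rw [heq, ← hstep 0 hj0.symm, h0]
  rcases eq_or_ne (j : ℕ) (2 * n - 1) with hjl | hjl
  · have heq : psi n (phi n p) (chi n p) j = false := by
      simp [psi, hjl]; omega
    rw [heq, ← hstep _ hjl.symm, hl]
  -- interior
  have hj3 : 1 ≤ (j : ℕ) ∧ (j : ℕ) ≤ 2 * n - 2 := by omega
  rcases Nat.even_or_odd ((j : ℕ) - 1) with ⟨i, hi⟩ | ⟨i, hi⟩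
  · -- j = 2i+1
    have hjj : (j : ℕ) = 2 * i + 1 := by omega
    have hilt : i < n - 1 := by omega
    have key : stepAt (psi n (phi n p) (chi n p)) (2 * i + 1) = p j := by
      rw [stepAt_psi_fst _ _ hilt, ← hstep _ hjj.symm]
      have hm : mext (phi n p) i = phi n p ⟨i, hilt⟩ := by simp [mext, hilt]
      have hc : cext (chi n p) i = chi n p ⟨i, hilt⟩ := by simp [cext, hilt]
      rw [hm, hc]
      show _ = stepAt p (2 * i + 1)
      cases h1 : stepAt p (2 * i + 1) <;> cases h2 : stepAt p (2 * i + 2) <;>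
        simp [phi, chi, h1, h2]
    rw [← key, ← stepAt_val (psi n (phi n p) (chi n p)) j, hjj]
  · -- j = 2i+2
    have hjj : (j : ℕ) = 2 * i + 2 := by omega
    have hilt : i < n - 1 := by omega
    have key : stepAt (psi n (phi n p) (chi n p)) (2 * i + 2) = p j := by
      rw [stepAt_psi_snd _ _ hilt, ← hstep _ hjj.symm]
      have hm : mext (phi n p) i = phi n p ⟨i, hilt⟩ := by simp [mext, hilt]
      have hc : cext (chi n p) i = chi n p ⟨i, hilt⟩ := by simp [cext, hilt]
      rw [hm, hc]
      show _ = stepAt p (2 * i + 2)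
      cases h1 : stepAt p (2 * i + 1) <;> cases h2 : stepAt p (2 * i + 2) <;>
        simp [phi, chi, h1, h2]
    rw [← key, ← stepAt_val (psi n (phi n p) (chi n p)) j, hjj]

lemma phi_psi {n : ℕ} (m : Fin (n - 1) → Option Bool) (c : Fin (n - 1) → Bool)
    (hcon : ∀ i, m i ≠ none → c i = false) :
    phi n (psi n m c) = m := by
  funext i
  have hilt : (i : ℕ) < n - 1 := i.2
  have hm : mext m (i : ℕ) = m i := by simp [mext, hilt]
  have hc : cext c (i : ℕ) = c i := by simp [cext, hilt]
  have h1 := stepAt_psi_fst m c hilt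
  have h2 := stepAt_psi_snd m c hilt
  rw [hm, hc] at h1 h2
  show (match stepAt (psi n m c) (2 * (i : ℕ) + 1),
      stepAt (psi n m c) (2 * (i : ℕ) + 2) with
    | true, true => some true
    | false, false => some false
    | _, _ => none) = m i
  rw [h1, h2]
  rcases hmi : m i with _ | b
  · cases hcv : c i <;> simp
  · cases b <;> simp

lemma chi_psi {n : ℕ} (m : Fin (n - 1) → Option Bool) (c : Fin (n - 1) → Bool)
    (hcon : ∀ i, m i ≠ none → c i = false) :
    chi n (psi n m c) = c := by
  funext i
  have hilt : (i : ℕ) < n - 1 := i.2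
  have hm : mext m (i : ℕ) = m i := by simp [mext, hilt]
  have hc : cext c (i : ℕ) = c i := by simp [cext, hilt]
  have h1 := stepAt_psi_fst m c hilt
  have h2 := stepAt_psi_snd m c hilt
  rw [hm, hc] at h1 h2
  show (stepAt (psi n m c) (2 * (i : ℕ) + 1) &&
      !(stepAt (psi n m c) (2 * (i : ℕ) + 2))) = c i
  rw [h1, h2]
  rcases hmi : m i with _ | b
  · cases hcv : c i <;> simp
  · have := hcon i (by simp [hmi])
    cases b <;> simp [this]

lemma rk_eq {n : ℕ} (p : Fin (2 * n) → Bool) :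
    rk p = (Finset.univ.filter fun i : Fin (n - 1) =>
      stepAt p (2 * (i : ℕ) + 1) = true).card := by
  unfold rk
  refine Finset.card_bij'
    (fun (a : ℕ) (ha : a ∈ (Finset.Icc 1 (n - 1)).filter
        fun i => stepAt p (2 * i - 1) = true) =>
      (⟨a - 1, by simp only [Finset.mem_filter, Finset.mem_Icc] at ha; omega⟩ : Fin (n - 1)))
    (fun (b : Fin (n - 1)) _ => (b : ℕ) + 1) ?_ ?_ ?_ ?_
  · intro a ha
    simp only [Finset.mem_filter, Finset.mem_Icc] at ha ⊢
    refine ⟨Finset.mem_univ _, ?_⟩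
    have : 2 * (a - 1) + 1 = 2 * a - 1 := by omega
    rw [this]; exact ha.2
  · intro b hb
    simp only [Finset.mem_filter, Finset.mem_Icc, Finset.mem_univ, true_and] at hb ⊢
    have hblt : (b : ℕ) < n - 1 := b.2
    refine ⟨⟨by omega, by omega⟩, ?_⟩
    have : 2 * ((b : ℕ) + 1) - 1 = 2 * (b : ℕ) + 1 := by omega
    rw [this]; exact hb
  · intro a ha
    simp only [Finset.mem_filter, Finset.mem_Icc] at ha
    simp; omega
  · intro b hb
    apply Fin.ext; simp

lemma rkM_eq {n : ℕ} (m : Fin (n - 1) → Option Bool) :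
    rkM m = (Finset.univ.filter fun i : Fin (n - 1) => m i = some true).card := by
  unfold rkM upM
  congr 1
  apply Finset.filter_congr
  intro i _
  simp [i.2]

lemma rk_psi {n : ℕ} (m : Fin (n - 1) → Option Bool) (c : Fin (n - 1) → Bool)
    (hcon : ∀ i, m i ≠ none → c i = false) :
    rk (psi n m c) = rkM m + (Finset.univ.filter fun i : Fin (n - 1) => c i = true).card := by
  rw [rk_eq, rkM_eq]
  have hcond : ∀ i : Fin (n - 1),
      (stepAt (psi n m c) (2 * (i : ℕ) + 1) = true) ↔ (m i = some true ∨ c i = true) := by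
    intro i
    have hilt : (i : ℕ) < n - 1 := i.2
    have h1 := stepAt_psi_fst m c hilt
    have hm : mext m (i : ℕ) = m i := by simp [mext, hilt]
    have hc : cext c (i : ℕ) = c i := by simp [cext, hilt]
    rw [hm, hc] at h1
    rw [h1]
    rcases hmi : m i with _ | b
    · cases hcv : c i <;> simp
    · have := hcon i (by simp [hmi])
      cases b <;> simp [this]
  rw [Finset.filter_congr (fun i _ => hcond i), Finset.filter_or,
    Finset.card_union_of_disjoint, ]
  rw [Finset.disjoint_filter]
  intro i _ h1 h2
  have := hcon i (by simp [h1])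
  rw [this] at h2; exact Bool.false_ne_true h2

lemma sum_range_odd_split (N : ℕ) (f : ℕ → ℕ) :
    ∑ k ∈ Finset.range (2 * N + 1), f k
      = f 0 + ∑ i ∈ Finset.range N, (f (2 * i + 1) + f (2 * i + 2)) := by
  induction N with
  | zero => simp
  | succ N ih =>
    have h : 2 * (N + 1) + 1 = (2 * N + 1) + 1 + 1 := by ring
    rw [h, Finset.sum_range_succ, Finset.sum_range_succ, ih, Finset.sum_range_succ,
      show 2 * N + 1 + 1 = 2 * N + 2 from by ring]
    ring

lemma area_psi {n : ℕ} (m : Fin (n - 1) → Option Bool) (c : Fin (n - 1) → Bool)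
    (hn : 1 ≤ n) (hM : IsMotzkin m) (hcon : ∀ i, m i ≠ none → c i = false) :
    area (psi n m c) = areaM n m
      + (Finset.univ.filter fun i : Fin (n - 1) => c i = true).card := by
  have hMle : ∀ j, j ≤ n - 1 → downM m j ≤ upM m j := fun j hj => hM.2 j (by omega)
  have hcon0 : ∀ i, m i ≠ none → (fun _ : Fin (n - 1) => false) i = false := fun _ _ => rfl
  have key : ∀ (c' : Fin (n - 1) → Bool), (∀ i, m i ≠ none → c' i = false) → ∀ i, i < n →
      height (psi n m c') (2 * i + 1) / 2 + height (psi n m c') (2 * i + 2) / 2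
        = (upM m i - downM m i)
          + (if i < n - 1 then
              (max (upM m i - downM m i) (upM m (i + 1) - downM m (i + 1))
                + (if cext c' i = true then 1 else 0))
            else 0) := by
    intro c' hc' i hilt2
    have hile : i ≤ n - 1 := by omega
    obtain ⟨hu, hd⟩ := psi_counts m c' hn i hile
    have hsb := upM_add_downM_le m i
    have hMlei := hMle i hile
    unfold height
    by_cases hi1 : i < n - 1
    · -- interior pair
      have hsb' := upM_add_downM_le m (i + 1)
      have hMlei' := hMle (i + 1) (by omega)
      have e : 2 * i + 2 = (2 * i + 1) + 1 := by omega
      have hu2 := upCount_succ (psi n m c') (2 * i + 1)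
      have hd2 := downCount_succ (psi n m c') (2 * i + 1) (by omega)
      rw [← e] at hu2 hd2
      have hstep := stepAt_psi_fst m c' hi1
      have hmx : mext m i = m ⟨i, hi1⟩ := by simp [mext, hi1]
      have hcx : cext c' i = c' ⟨i, hi1⟩ := by simp [cext, hi1]
      have hums := upM_succ m i
      have hdms := downM_succ m i
      simp only [hi1, if_true, hcx]
      rw [hmx] at hstep hums hdms
      rw [hcx] at hstep
      rcases hmi : m ⟨i, hi1⟩ with _ | b
      · -- level step
        rw [hmi] at hstep hums hdms
        have hums' : upM m (i + 1) = upM m i := by rw [hums]; simp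
        have hdms' : downM m (i + 1) = downM m i := by rw [hdms]; simp
        cases hcv : c' ⟨i, hi1⟩ <;>
        · rw [hcv] at hstep
          simp only [] at hstep
          rw [hstep] at hu2 hd2
          simp only [if_pos, if_neg, Bool.true_eq_false, Bool.false_eq_true, if_true,
            if_false, add_zero] at hu2 hd2
          norm_num
          omega
      · rw [hmi] at hstep hums hdms
        have hcv := hc' ⟨i, hi1⟩ (by rw [hmi]; simp)
        rw [hcv]
        have hums' := hums
        have hdms' := hdms
        simp only [Option.some.injEq, reduceCtorEq, if_true, if_false, add_zero,
          Bool.true_eq_false, Bool.false_eq_true] at hums' hdms'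
        cases b
        · have hstep' : stepAt (psi n m c') (2 * i + 1) = false := by rw [hstep]
          rw [hstep'] at hu2 hd2
          norm_num at hu2 hd2 hums' hdms' ⊢
          omega
        · have hstep' : stepAt (psi n m c') (2 * i + 1) = true := by rw [hstep]
          rw [hstep'] at hu2 hd2
          norm_num at hu2 hd2 hums' hdms' ⊢
          omega
    · -- last pair : i = n - 1
      have hieq : i = n - 1 := by omega
      have hD := motz_to_dyck m c' hn hM
      have h2n : 2 * i + 2 = 2 * n := by omega
      have htot := count_total (psi n m c') (2 * n) le_rfl
      have hupn := hD.1
      have hhh : upCount (psi n m c') (2 * i + 2) = upCount (psi n m c') (2 * n) :=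
        congrArg _ h2n
      have hhh' : downCount (psi n m c') (2 * i + 2) = downCount (psi n m c') (2 * n) :=
        congrArg _ h2n
      have hMeq' : upM m i = downM m i := by rw [hieq]; exact hM.1
      simp only [hi1, if_false]
      omega
  have area_eq : ∀ (c' : Fin (n - 1) → Bool), (∀ i, m i ≠ none → c' i = false) →
      area (psi n m c') = height (psi n m c') 0 / 2
        + ∑ i ∈ Finset.range n, ((upM m i - downM m i)
          + (if i < n - 1 then
              (max (upM m i - downM m i) (upM m (i + 1) - downM m (i + 1))
                + (if cext c' i = true then 1 else 0))
            else 0)) := by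
    intro c' hc'
    unfold area
    rw [sum_range_odd_split n (fun k => height (psi n m c') k / 2)]
    congr 1
    apply Finset.sum_congr rfl
    intro i hi
    exact key c' hc' i (Finset.mem_range.1 hi)
  rw [areaM, rho_eq_psi, area_eq c hcon, area_eq _ hcon0]
  have hsplit : ∀ (c' : Fin (n - 1) → Bool),
      ∑ i ∈ Finset.range n, ((upM m i - downM m i)
          + (if i < n - 1 then
              (max (upM m i - downM m i) (upM m (i + 1) - downM m (i + 1))
                + (if cext c' i = true then 1 else 0))
            else 0))
      = (∑ i ∈ Finset.range n, ((upM m i - downM m i)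
          + (if i < n - 1 then
              max (upM m i - downM m i) (upM m (i + 1) - downM m (i + 1))
            else 0)))
        + ∑ i ∈ Finset.range n, (if i < n - 1 then (if cext c' i = true then 1 else 0) else 0) := by
    intro c'
    rw [← Finset.sum_add_distrib]
    apply Finset.sum_congr rfl
    intro i _
    by_cases h : i < n - 1 <;> simp [h] <;> omega
  rw [hsplit c, hsplit]
  have hz : ∑ i ∈ Finset.range n,
      (if i < n - 1 then (if cext (fun _ : Fin (n - 1) => false) i = true then 1 else 0) else 0) = 0 := by
    apply Finset.sum_eq_zero
    intro i _
    by_cases h : i < n - 1 <;> simp [h, cext]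
  rw [hz]
  have hstep1 : ∑ i ∈ Finset.range n, (if i < n - 1 then (if cext c i = true then 1 else 0) else 0)
      = ∑ i ∈ Finset.range (n - 1), (if cext c i = true then (1:ℕ) else 0) := by
    rw [← Finset.sum_subset (Finset.range_subset_range.2 (by omega : n - 1 ≤ n))
      (fun x _ hx => by
        simp only [Finset.mem_range, not_lt] at hx
        simp [show ¬ x < n - 1 from by omega])]
    apply Finset.sum_congr rfl
    intro i hi
    simp [Finset.mem_range.1 hi]
  have hstep2 : ∑ i ∈ Finset.range (n - 1), (if cext c i = true then (1:ℕ) else 0)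
      = (Finset.univ.filter fun i : Fin (n - 1) => c i = true).card := by
    rw [← Finset.card_filter]
    refine Finset.card_bij'
      (fun (a : ℕ) (ha : a ∈ (Finset.range (n - 1)).filter fun i => cext c i = true) =>
        (⟨a, by simp only [Finset.mem_filter, Finset.mem_range] at ha; exact ha.1⟩ : Fin (n - 1)))
      (fun (b : Fin (n - 1)) _ => (b : ℕ)) ?_ ?_ ?_ ?_
    · intro a ha
      simp only [Finset.mem_filter, Finset.mem_range, Finset.mem_univ, true_and] at ha ⊢
      have := ha.2
      rwa [cext, dif_pos ha.1] at this
    · intro b hb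
      simp only [Finset.mem_filter, Finset.mem_univ, Finset.mem_range, true_and] at hb ⊢
      exact ⟨b.2, by rwa [cext, dif_pos b.2, Fin.eta]⟩
    · intro a ha; rfl
    · intro b hb; apply Fin.ext; rfl
  rw [hstep1, hstep2]
  have h0 : ∀ c' : Fin (n - 1) → Bool, height (psi n m c') 0 = 0 := by
    intro c'; unfold height; rw [upCount_eq_sum]; simp
  rw [h0, h0]
  omega

lemma downM_eq_card {n : ℕ} (m : Fin (n - 1) → Option Bool) :
    downM m (n - 1) = (Finset.univ.filter fun i : Fin (n - 1) => m i = some false).card := by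
  unfold downM
  congr 1
  apply Finset.filter_congr
  intro i _
  simp [i.2]

lemma card_none_eq {n : ℕ} (m : Fin (n - 1) → Option Bool) (hM : IsMotzkin m) :
    (Finset.univ.filter fun i : Fin (n - 1) => m i = none).card = (n - 1) - 2 * rkM m := by
  have h1 : (Finset.univ.filter fun i : Fin (n - 1) => m i = none).card
      + (Finset.univ.filter fun i : Fin (n - 1) => ¬ (m i = none)).card
      = (Finset.univ : Finset (Fin (n - 1))).card :=
    Finset.card_filter_add_card_filter_not _
  have h2 : (Finset.univ.filter fun i : Fin (n - 1) => ¬ (m i = none))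
      = (Finset.univ.filter fun i : Fin (n - 1) => m i = some true)
        ∪ (Finset.univ.filter fun i : Fin (n - 1) => m i = some false) := by
    ext x
    simp only [Finset.mem_filter, Finset.mem_union, Finset.mem_univ, true_and]
    rcases hx : m x with _ | b
    · simp
    · cases b <;> simp
  have h3 : Disjoint (Finset.univ.filter fun i : Fin (n - 1) => m i = some true)
      (Finset.univ.filter fun i : Fin (n - 1) => m i = some false) := by
    rw [Finset.disjoint_filter]
    intro i _ hT hF
    rw [hT] at hF; simp at hF
  have h4 := Finset.card_union_of_disjoint h3
  have h5 : (Finset.univ : Finset (Fin (n - 1))).card = n - 1 := by simp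
  have h6 := rkM_eq m
  have h7 := downM_eq_card m
  have h8 : upM m (n - 1) = downM m (n - 1) := hM.1
  rw [h2, h4] at h1
  unfold rkM at *
  omega

lemma sum_constrained_pow {n : ℕ} (m : Fin (n - 1) → Option Bool) (x : ℝ) :
    ∑ c ∈ Finset.univ.filter
        (fun c : Fin (n - 1) → Bool => ∀ i, m i ≠ none → c i = false),
      x ^ (Finset.univ.filter fun i : Fin (n - 1) => c i = true).card
    = (1 + x) ^ (Finset.univ.filter fun i : Fin (n - 1) => m i = none).card := by
  classical
  set N := Finset.univ.filter fun i : Fin (n - 1) => m i = none with hN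
  have step1 : ∑ c ∈ Finset.univ.filter
        (fun c : Fin (n - 1) → Bool => ∀ i, m i ≠ none → c i = false),
      x ^ (Finset.univ.filter fun i : Fin (n - 1) => c i = true).card
      = ∑ S ∈ N.powerset, x ^ S.card := by
    refine Finset.sum_nbij' (i := fun c => Finset.univ.filter fun i : Fin (n - 1) => c i = true)
      (j := fun S => fun i => decide (i ∈ S)) ?_ ?_ ?_ ?_ (fun c hc => rfl)
    · intro c hc
      simp only [Finset.mem_filter, Finset.mem_univ, true_and] at hc
      rw [Finset.mem_powerset]
      intro i hi
      simp only [Finset.mem_filter, Finset.mem_univ, true_and] at hi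
      rw [hN]
      simp only [Finset.mem_filter, Finset.mem_univ, true_and]
      by_contra hni
      have := hc i hni
      rw [this] at hi; exact Bool.false_ne_true hi
    · intro S hS
      simp only [Finset.mem_powerset] at hS
      simp only [Finset.mem_filter, Finset.mem_univ, true_and]
      intro i hi
      by_contra hd
      simp only [decide_eq_false_iff_not, not_not] at hd
      have := hS hd
      rw [hN] at this
      simp only [Finset.mem_filter, Finset.mem_univ, true_and] at this
      exact hi this
    · intro c hc
      funext i
      by_cases h : c i = true
      · simp [h]
      · simp only [Bool.not_eq_true] at h
        simp [h]
    · intro S hS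
      ext i
      simp
  rw [step1]
  have step2 : ∀ S ∈ N.powerset, x ^ S.card
      = (∏ i ∈ S, x) * ∏ i ∈ N \ S, (1:ℝ) := by
    intro S hS
    rw [Finset.prod_const, Finset.prod_const]
    simp
  rw [Finset.sum_congr rfl step2, ← Finset.prod_add, Finset.prod_const, add_comm]

/-- Refined γ-nonnegativity: for `n ≥ 1`,
`D_n(q,t) = ∑_{m ∈ M(n)} q^area(m) t^rk(m) (1+qt)^(n-1-2 rk(m))`,
the sum being over Motzkin paths of order `n`. -/
theorem refined_gamma_nonnegativity (n : ℕ) (hn : 1 ≤ n) (q t : ℝ) :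
    (∑ p ∈ dyckSet n, q ^ area p * t ^ rk p) =
      ∑ m ∈ motzSet n,
        q ^ areaM n m * t ^ rkM m * (1 + q * t) ^ (n - 1 - 2 * rkM m) := by
  classical
  have hA : (∑ p ∈ dyckSet n, q ^ area p * t ^ rk p)
      = ∑ mc ∈ Finset.univ.filter
          (fun mc : (Fin (n - 1) → Option Bool) × (Fin (n - 1) → Bool) =>
            IsMotzkin mc.1 ∧ ∀ i, mc.1 i ≠ none → mc.2 i = false),
          q ^ area (psi n mc.1 mc.2) * t ^ rk (psi n mc.1 mc.2) := by
    refine Finset.sum_nbij' (i := fun p => (phi n p, chi n p))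
      (j := fun mc => psi n mc.1 mc.2) ?_ ?_ ?_ ?_ ?_
    · intro p hp
      have hD : IsDyck n p := (Finset.mem_filter.1 hp).2
      have h0 := dyck_step_zero p hn hD
      have hl := dyck_step_last p hn hD
      have hinv := psi_phi_chi p hn h0 hl
      have hconstr : ∀ i, phi n p i ≠ none → chi n p i = false := by
        intro i hne
        cases h1 : stepAt p (2 * (i : ℕ) + 1) <;> cases h2 : stepAt p (2 * (i : ℕ) + 2)
        · simp [chi, h1, h2]
        · simp [chi, h1, h2]
        · exfalso; apply hne; simp [phi, h1, h2]
        · simp [chi, h1, h2]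
      have hM : IsMotzkin (phi n p) := dyck_to_motz _ _ hn (by rw [hinv]; exact hD)
      simp only [Finset.mem_filter, Finset.mem_univ, true_and]
      exact ⟨hM, hconstr⟩
    · intro mc hmc
      simp only [Finset.mem_filter, Finset.mem_univ, true_and] at hmc
      simp only [dyckSet, Finset.mem_filter, Finset.mem_univ, true_and]
      exact motz_to_dyck _ _ hn hmc.1
    · intro p hp
      have hD : IsDyck n p := (Finset.mem_filter.1 hp).2
      exact psi_phi_chi p hn (dyck_step_zero p hn hD) (dyck_step_last p hn hD)
    · intro mc hmc
      simp only [Finset.mem_filter, Finset.mem_univ, true_and] at hmc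
      have h1 := phi_psi mc.1 mc.2 hmc.2
      have h2 := chi_psi mc.1 mc.2 hmc.2
      exact Prod.ext h1 h2
    · intro p hp
      have hD : IsDyck n p := (Finset.mem_filter.1 hp).2
      have hinv := psi_phi_chi p hn (dyck_step_zero p hn hD) (dyck_step_last p hn hD)
      simp only []
      rw [hinv]
  rw [hA]
  rw [Finset.sum_finset_product _ (motzSet n)
      (fun m => Finset.univ.filter
        fun c : Fin (n - 1) → Bool => ∀ i, m i ≠ none → c i = false)
      (fun mc => by
        simp only [Finset.mem_filter, Finset.mem_univ, true_and, motzSet])]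
  apply Finset.sum_congr rfl
  intro m hm
  have hM : IsMotzkin m := (Finset.mem_filter.1 hm).2
  have hinner : ∀ c ∈ Finset.univ.filter
      (fun c : Fin (n - 1) → Bool => ∀ i, m i ≠ none → c i = false),
      q ^ area (psi n m c) * t ^ rk (psi n m c)
        = (q ^ areaM n m * t ^ rkM m)
            * (q * t) ^ (Finset.univ.filter fun i : Fin (n - 1) => c i = true).card := by
    intro c hc
    have hcon : ∀ i, m i ≠ none → c i = false :=
      (Finset.mem_filter.1 hc).2
    rw [area_psi m c hn hM hcon, rk_psi m c hcon, pow_add, pow_add, mul_pow]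
    ring
  rw [Finset.sum_congr rfl hinner, ← Finset.mul_sum, sum_constrained_pow,
    card_none_eq m hM]
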